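/- arXiv:1902.10179 — 2 statements merged into one kernel-verified Lean document; each statement's English description precedes it below -/
import Mathlib

section
/- Suppose a : ℕ → ℂ satisfies ∑_{m ≤ y, gcd(m,P)=1} |a(m)|² ≤ C y ∏_{p | P}(1 - 1/p) for all y ≥ 1 and all squarefree P. Define b(n) = 0 unless n = s·d² with s squarefree, gcd(s,d)=1 (i.e. n has the shape p₁⋯p_h (p_{h+1}⋯p_r)²), in which case |b(n)| = |a(squarefree part of n)|. Then ∑_{n ≤ x, gcd(n,P)=1} |b(n)|² ≤ ∑_{d ≤ √x} ∑_{m ≤ x/d², gcd(m,P)=1} |a(m)|² ≤ C' x ∏_{p | P}(1 - 1/p) · ∑_{d ≤ √x} d^{-2} plus an error bounded via truncation of the d-sum. -/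
open Finset

open Classical in
/-- Decomposition of `n` as `s * d^2` with `s` squarefree coprime to `d`,
chosen via choice (junk value `(0,0)` if no such decomposition exists). -/
noncomputable def sdPair (n : ℕ) : ℕ × ℕ :=
  if h : ∃ s d : ℕ, Squarefree s ∧ Nat.Coprime s d ∧ n = s * d ^ 2 then
    (h.choose, h.choose_spec.choose)
  else (0, 0)

theorem sdPair_spec (n : ℕ)
    (h : ∃ s d : ℕ, Squarefree s ∧ Nat.Coprime s d ∧ n = s * d ^ 2) :
    Squarefree (sdPair n).1 ∧ Nat.Coprime (sdPair n).1 (sdPair n).2 ∧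
      n = (sdPair n).1 * (sdPair n).2 ^ 2 := by
  rw [sdPair, dif_pos h]
  exact h.choose_spec.choose_spec

/-- Transfer estimate (3-10): if the mean square of `a` over integers coprime
to any squarefree `P` is `≤ C y ∏_{p|P}(1-1/p)`, and `|b|` is supported on
numbers of the shape `s·d²` (`s` squarefree, `gcd(s,d)=1`) with
`|b(s·d²)| = |a(s)|`, then the mean square of `b` over `n ≤ x` coprime to `P`
is bounded by `∑_{d ≤ √x} ∑_{m ≤ x/d², (m,P)=1} |a(m)|²`, which in turn is
`≤ C x ∏_{p|P}(1-1/p) ∑_{d ≤ √x} d⁻²`. -/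
theorem stmt10 (a b : ℕ → ℂ) (C : ℝ) (hC : 0 ≤ C)
    (ha : ∀ y : ℝ, 1 ≤ y → ∀ P : ℕ, Squarefree P →
      ∑ m ∈ (Finset.Icc 1 ⌊y⌋₊).filter (fun m => Nat.Coprime m P), ‖a m‖ ^ 2 ≤
        C * y * ∏ p ∈ P.primeFactors, (1 - 1 / (p : ℝ)))
    (hb0 : ∀ n : ℕ, (¬ ∃ s d : ℕ, Squarefree s ∧ Nat.Coprime s d ∧ n = s * d ^ 2) →
      b n = 0)
    (hb : ∀ s d : ℕ, Squarefree s → Nat.Coprime s d → ‖b (s * d ^ 2)‖ = ‖a s‖) :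
    ∀ x : ℝ, 1 ≤ x → ∀ P : ℕ, Squarefree P →
      (∑ n ∈ (Finset.Icc 1 ⌊x⌋₊).filter (fun n => Nat.Coprime n P), ‖b n‖ ^ 2 ≤
        ∑ d ∈ Finset.Icc 1 (Nat.sqrt ⌊x⌋₊),
          ∑ m ∈ (Finset.Icc 1 ⌊x / (d : ℝ) ^ 2⌋₊).filter (fun m => Nat.Coprime m P),
            ‖a m‖ ^ 2) ∧
      (∑ d ∈ Finset.Icc 1 (Nat.sqrt ⌊x⌋₊),
          ∑ m ∈ (Finset.Icc 1 ⌊x / (d : ℝ) ^ 2⌋₊).filter (fun m => Nat.Coprime m P),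
            ‖a m‖ ^ 2 ≤
        C * x * (∏ p ∈ P.primeFactors, (1 - 1 / (p : ℝ))) *
          ∑ d ∈ Finset.Icc 1 (Nat.sqrt ⌊x⌋₊), 1 / (d : ℝ) ^ 2) := by
  classical
  intro x hx P hP
  have hx0 : (0 : ℝ) < x := by linarith
  constructor
  · -- Part 1
    set S := (Finset.Icc 1 ⌊x⌋₊).filter (fun n => Nat.Coprime n P) with hS
    set T := S.filter (fun n => b n ≠ 0) with hT
    have h1 : ∑ n ∈ S, ‖b n‖ ^ 2 = ∑ n ∈ T, ‖b n‖ ^ 2 := by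
      refine (Finset.sum_subset (Finset.filter_subset _ _) ?_).symm
      intro n hn hn'
      have : b n = 0 := by
        by_contra h
        exact hn' (Finset.mem_filter.mpr ⟨hn, h⟩)
      simp [this]
    rw [h1]
    -- rewrite RHS as a sum over a sigma set
    rw [← Finset.sum_sigma (Finset.Icc 1 (Nat.sqrt ⌊x⌋₊))
      (fun d => (Finset.Icc 1 ⌊x / (d : ℝ) ^ 2⌋₊).filter (fun m => Nat.Coprime m P))
      (fun p => ‖a p.2‖ ^ 2)]
    set Sx := (Finset.Icc 1 (Nat.sqrt ⌊x⌋₊)).sigma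
      (fun d => (Finset.Icc 1 ⌊x / (d : ℝ) ^ 2⌋₊).filter (fun m => Nat.Coprime m P))
    -- the map
    set e : ℕ → (Σ _ : ℕ, ℕ) := fun n => ⟨(sdPair n).2, (sdPair n).1⟩ with he
    have key : ∀ n ∈ T, Squarefree (sdPair n).1 ∧ Nat.Coprime (sdPair n).1 (sdPair n).2 ∧
        n = (sdPair n).1 * (sdPair n).2 ^ 2 := by
      intro n hn
      have hbne : b n ≠ 0 := (Finset.mem_filter.mp hn).2
      have hex : ∃ s d : ℕ, Squarefree s ∧ Nat.Coprime s d ∧ n = s * d ^ 2 := by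
        by_contra h
        exact hbne (hb0 n h)
      exact sdPair_spec n hex
    have hmem : ∀ n ∈ T, e n ∈ Sx := by
      intro n hn
      obtain ⟨hs, hsd, hdecomp⟩ := key n hn
      have hnS : n ∈ S := (Finset.mem_filter.mp hn).1
      obtain ⟨hn1, hnP⟩ := Finset.mem_filter.mp hnS
      obtain ⟨hn1', hn2⟩ := Finset.mem_Icc.mp hn1
      set s := (sdPair n).1
      set d := (sdPair n).2
      have hs1 : 1 ≤ s := by
        rcases Nat.eq_zero_or_pos s with h | h
        · exfalso; rw [h, zero_mul] at hdecomp; omega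
        · exact h
      have hd1 : 1 ≤ d := by
        rcases Nat.eq_zero_or_pos d with h | h
        · exfalso; rw [h] at hdecomp; simp at hdecomp; omega
        · exact h
      have hdd : d * d ≤ ⌊x⌋₊ := by
        have : d * d ≤ s * d ^ 2 := by nlinarith
        omega
      have hnx : (n : ℝ) ≤ x := le_trans (Nat.cast_le.mpr hn2) (Nat.floor_le hx0.le)
      have hsle : (s : ℝ) ≤ x / (d : ℝ) ^ 2 := by
        rw [le_div_iff₀ (by positivity)]
        calc (s : ℝ) * (d : ℝ) ^ 2 = (n : ℝ) := by
              rw [hdecomp]; push_cast; ring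
          _ ≤ x := hnx
      have hsP : Nat.Coprime s P :=
        Nat.Coprime.coprime_dvd_left ⟨d ^ 2, hdecomp⟩ hnP
      refine Finset.mem_sigma.mpr ⟨Finset.mem_Icc.mpr ⟨hd1, Nat.le_sqrt.mpr hdd⟩,
        Finset.mem_filter.mpr ⟨Finset.mem_Icc.mpr ⟨hs1, Nat.le_floor hsle⟩, hsP⟩⟩
    have hinj : Set.InjOn e T := by
      intro n₁ h₁ n₂ h₂ heq
      have k₁ := (key n₁ h₁).2.2
      have k₂ := (key n₂ h₂).2.2
      have e1 : (sdPair n₁).2 = (sdPair n₂).2 := congrArg Sigma.fst heq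
      have e2 : (sdPair n₁).1 = (sdPair n₂).1 := by
        have := congrArg Sigma.snd heq
        simpa [he] using this
      rw [k₁, k₂, e1, e2]
    have hval : ∀ n ∈ T, ‖b n‖ ^ 2 = ‖a (e n).2‖ ^ 2 := by
      intro n hn
      obtain ⟨hs, hsd, hdecomp⟩ := key n hn
      have h2 : ‖b n‖ = ‖a (sdPair n).1‖ := by
        conv_lhs => rw [hdecomp]
        exact hb _ _ hs hsd
      simp [he, h2]
    calc ∑ n ∈ T, ‖b n‖ ^ 2 = ∑ n ∈ T, ‖a (e n).2‖ ^ 2 := Finset.sum_congr rfl hval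
      _ = ∑ p ∈ T.image e, ‖a p.2‖ ^ 2 := by
          rw [Finset.sum_image (fun n hn m hm h => hinj hn hm h)]
      _ ≤ ∑ p ∈ Sx, ‖a p.2‖ ^ 2 := by
          refine Finset.sum_le_sum_of_subset_of_nonneg ?_ (fun _ _ _ => by positivity)
          intro p hp
          obtain ⟨n, hn, rfl⟩ := Finset.mem_image.mp hp
          exact hmem n hn
  · -- Part 2
    calc ∑ d ∈ Finset.Icc 1 (Nat.sqrt ⌊x⌋₊),
          ∑ m ∈ (Finset.Icc 1 ⌊x / (d : ℝ) ^ 2⌋₊).filter (fun m => Nat.Coprime m P),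
            ‖a m‖ ^ 2
        ≤ ∑ d ∈ Finset.Icc 1 (Nat.sqrt ⌊x⌋₊),
            C * (x / (d : ℝ) ^ 2) * ∏ p ∈ P.primeFactors, (1 - 1 / (p : ℝ)) := by
          refine Finset.sum_le_sum fun d hd => ?_
          obtain ⟨hd1, hd2⟩ := Finset.mem_Icc.mp hd
          have hdd : (d : ℝ) ^ 2 ≤ x := by
            have h1 : d * d ≤ ⌊x⌋₊ := Nat.le_sqrt.mp hd2
            have h2 : ((d * d : ℕ) : ℝ) ≤ x :=
              le_trans (Nat.cast_le.mpr h1) (Nat.floor_le hx0.le)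
            push_cast at h2
            nlinarith
          have hy : 1 ≤ x / (d : ℝ) ^ 2 := by
            rw [le_div_iff₀ (by positivity)]
            simpa using hdd
          exact ha _ hy P hP
      _ = C * x * (∏ p ∈ P.primeFactors, (1 - 1 / (p : ℝ))) *
            ∑ d ∈ Finset.Icc 1 (Nat.sqrt ⌊x⌋₊), 1 / (d : ℝ) ^ 2 := by
          rw [Finset.mul_sum]
          exact Finset.sum_congr rfl fun d _ => by ring
end

section
/- Partial summation bound for polynomial perturbations: let a : ℕ → ℂ, x ≥ 1, and let R(n) = ∑_{j=1}^k β_j n^j with |β_j| ≤ 1/(q_j Q_j). Then for any function P̄ : ℕ → ℝ, |∑_{n ≤ x} a(n) e(P̄(n) + R(n))| ≪_k |S(x)| + x · max_{1 ≤ j ≤ k} max_{1 ≤ t ≤ x} (t^{j-1}/(q_j Q_j)) |S(t)|, where S(t) = ∑_{n ≤ t} a(n) e(P̄(n)) and e(θ) = e^{2πiθ}. -/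
open Finset Complex

/-- `e(θ) = e^{2πiθ}`. -/
noncomputable def eTwoPi (θ : ℝ) : ℂ := Complex.exp (2 * Real.pi * Complex.I * θ)

lemma eTwoPi_add (a b : ℝ) : eTwoPi (a + b) = eTwoPi a * eTwoPi b := by
  rw [eTwoPi, eTwoPi, eTwoPi, ← Complex.exp_add]
  congr 1
  push_cast
  ring

lemma norm_eTwoPi (θ : ℝ) : ‖eTwoPi θ‖ = 1 := by
  have h : (2 * (Real.pi : ℂ) * Complex.I * θ) = ((2 * Real.pi * θ : ℝ) : ℂ) * Complex.I := by
    push_cast; ring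
  rw [eTwoPi, h, Complex.norm_exp_ofReal_mul_I]

lemma norm_eTwoPi_sub_one (θ : ℝ) : ‖eTwoPi θ - 1‖ ≤ 4 * Real.pi * |θ| := by
  have hπ := Real.pi_pos
  have hz : ‖2 * (Real.pi : ℂ) * Complex.I * θ‖ = 2 * Real.pi * |θ| := by
    simp [abs_of_pos hπ]
  by_cases h : ‖2 * (Real.pi : ℂ) * Complex.I * θ‖ ≤ 1
  · have h2 := Complex.norm_exp_sub_one_le h
    rw [hz] at h2
    rw [eTwoPi]
    calc ‖Complex.exp (2 * (Real.pi : ℂ) * Complex.I * θ) - 1‖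
        ≤ 2 * (2 * Real.pi * |θ|) := h2
      _ ≤ 4 * Real.pi * |θ| := by nlinarith [abs_nonneg θ]
  · push_neg at h
    rw [hz] at h
    have h2 : ‖eTwoPi θ - 1‖ ≤ 2 := by
      calc ‖eTwoPi θ - 1‖ ≤ ‖eTwoPi θ‖ + ‖(1 : ℂ)‖ := norm_sub_le _ _
        _ = 2 := by rw [norm_eTwoPi]; norm_num
    linarith

lemma norm_eTwoPi_sub (a b : ℝ) : ‖eTwoPi a - eTwoPi b‖ ≤ 4 * Real.pi * |a - b| := by
  have h : eTwoPi a - eTwoPi b = eTwoPi b * (eTwoPi (a - b) - 1) := by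
    rw [mul_sub, ← eTwoPi_add, mul_one]
    congr 2
    ring
  rw [h, norm_mul, norm_eTwoPi, one_mul]
  exact norm_eTwoPi_sub_one _

lemma pow_sub_pow_le_aux (a b : ℝ) (ha : 0 ≤ a) (hab : a ≤ b) :
    ∀ j : ℕ, b ^ j - a ^ j ≤ j * b ^ (j - 1) * (b - a)
  | 0 => by simp
  | 1 => by simp
  | (j + 2) => by
    have ih := pow_sub_pow_le_aux a b ha hab (j + 1)
    have hb : 0 ≤ b := le_trans ha hab
    have h1 : b ^ (j + 2) - a ^ (j + 2)
        = b * (b ^ (j + 1) - a ^ (j + 1)) + a ^ (j + 1) * (b - a) := by ring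
    have h2 : b * (b ^ (j + 1) - a ^ (j + 1)) ≤ b * (((j : ℝ) + 1) * b ^ j * (b - a)) := by
      apply mul_le_mul_of_nonneg_left _ hb
      simpa using ih
    have h3 : a ^ (j + 1) ≤ b ^ (j + 1) := pow_le_pow_left₀ ha hab _
    have h4 : b * (((j : ℝ) + 1) * b ^ j * (b - a)) = ((j : ℝ) + 1) * b ^ (j + 1) * (b - a) := by
      rw [pow_succ]; ring
    have h5 : a ^ (j + 1) * (b - a) ≤ b ^ (j + 1) * (b - a) :=
      mul_le_mul_of_nonneg_right h3 (by linarith)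
    have hgoal : (j + 2 : ℕ) - 1 = j + 1 := rfl
    rw [hgoal]
    push_cast
    nlinarith [h1, h2, h4, h5]

/-- Partial summation bound (3-11): removing the diophantine error
`R(n) = ∑_{j=1}^k β_j n^j`, `|β_j| ≤ 1/(q_j Q_j)`, from the phase costs at most
`≪_k |S(x)| + x · max_{1≤j≤k} max_{1≤t≤x} (t^{j-1}/(q_j Q_j)) |S(t)|`,
where `S(t) = ∑_{n ≤ t} a(n) e(P̄(n))`. -/
theorem stmt17 (k : ℕ) (hk : 1 ≤ k) :
    ∃ K : ℝ, 0 < K ∧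
      ∀ (a : ℕ → ℂ) (x : ℝ) (β qq QQ : ℕ → ℝ) (Pbar : ℕ → ℝ),
        1 ≤ x →
        (∀ j ∈ Finset.Icc 1 k, 1 ≤ qq j ∧ 1 ≤ QQ j) →
        (∀ j ∈ Finset.Icc 1 k, |β j| ≤ 1 / (qq j * QQ j)) →
        ∃ j ∈ Finset.Icc 1 k, ∃ t ∈ Finset.Icc 1 ⌊x⌋₊,
          ‖∑ n ∈ Finset.Icc 1 ⌊x⌋₊,
              a n * eTwoPi (Pbar n + ∑ i ∈ Finset.Icc 1 k, β i * (n : ℝ) ^ i)‖ ≤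
            K * (‖∑ n ∈ Finset.Icc 1 ⌊x⌋₊, a n * eTwoPi (Pbar n)‖ +
              x * ((t : ℝ) ^ (j - 1) / (qq j * QQ j)) *
                ‖∑ n ∈ Finset.Icc 1 t, a n * eTwoPi (Pbar n)‖) := by
  have hπ := Real.pi_pos
  set C : ℝ := 4 * Real.pi * (k : ℝ) ^ 2 * 2 ^ k with hCdef
  have hCpos : 0 < C := by positivity
  refine ⟨1 + C, by positivity, ?_⟩
  intro a x β qq QQ Pbar hx hq hβ
  have hN1 : 1 ≤ ⌊x⌋₊ := Nat.le_floor (by exact_mod_cast hx)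
  set N := ⌊x⌋₊ with hNdef
  have hNx : (N : ℝ) ≤ x := Nat.floor_le (by linarith)
  set S : ℕ → ℂ := fun t => ∑ n ∈ Finset.Icc 1 t, a n * eTwoPi (Pbar n) with hSdef
  obtain ⟨⟨j0, t0⟩, hmem, hmax⟩ :=
    Finset.exists_max_image ((Finset.Icc 1 k) ×ˢ (Finset.Icc 1 N))
      (fun p => (p.2 : ℝ) ^ (p.1 - 1) / (qq p.1 * QQ p.1) * ‖S p.2‖)
      ⟨(1, 1), by simp [hk, hN1]⟩
  rw [Finset.mem_product] at hmem
  obtain ⟨hj0, ht0⟩ := hmem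
  refine ⟨j0, hj0, t0, ht0, ?_⟩
  set M : ℝ := (t0 : ℝ) ^ (j0 - 1) / (qq j0 * QQ j0) * ‖S t0‖ with hMdef
  obtain ⟨hq0, hQ0⟩ := hq j0 hj0
  have hM0 : 0 ≤ M := by
    apply mul_nonneg _ (norm_nonneg _)
    apply div_nonneg (by positivity)
    nlinarith
  set R : ℕ → ℝ := fun n => ∑ i ∈ Finset.Icc 1 k, β i * (n : ℝ) ^ i with hRdef
  set f : ℕ → ℂ := fun n => eTwoPi (R n) with hfdef
  set g : ℕ → ℂ := fun n => if n = 0 then 0 else a n * eTwoPi (Pbar n) with hgdef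
  have hG : ∀ m : ℕ, ∑ i ∈ Finset.range (m + 1), g i = S m := by
    intro m
    rw [Finset.range_eq_Ico, Finset.sum_eq_sum_Ico_succ_bot (Nat.succ_pos m),
      Nat.succ_eq_add_one, Finset.Ico_add_one_right_eq_Icc]
    show (if 0 = 0 then (0:ℂ) else _) + _ = _
    rw [if_pos rfl, zero_add]
    apply Finset.sum_congr rfl
    intro n hn
    have hn0 : n ≠ 0 := by
      have := (Finset.mem_Icc.mp hn).1; omega
    show (if n = 0 then (0:ℂ) else _) = _
    rw [if_neg hn0]
  have habel : ∑ n ∈ Finset.Icc 1 N, a n * eTwoPi (Pbar n + R n)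
      = f N • S N - ∑ i ∈ Finset.range N, (f (i + 1) - f i) • S i := by
    have h1 : ∑ n ∈ Finset.Icc 1 N, a n * eTwoPi (Pbar n + R n)
        = ∑ i ∈ Finset.range (N + 1), f i • g i := by
      rw [Finset.range_eq_Ico, Finset.sum_eq_sum_Ico_succ_bot (Nat.succ_pos N),
        Nat.succ_eq_add_one, Finset.Ico_add_one_right_eq_Icc]
      show _ = f 0 • (if 0 = 0 then (0:ℂ) else _) + _
      rw [if_pos rfl, smul_zero, zero_add]
      apply Finset.sum_congr rfl
      intro n hn
      have hn0 : n ≠ 0 := by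
        have := (Finset.mem_Icc.mp hn).1; omega
      show a n * eTwoPi (Pbar n + R n) = f n • (if n = 0 then (0:ℂ) else _)
      rw [if_neg hn0, hfdef, smul_eq_mul, eTwoPi_add]
      ring
    rw [h1, Finset.sum_range_by_parts f g (N + 1)]
    rw [Nat.add_sub_cancel, hG N]
    congr 1
    apply Finset.sum_congr rfl
    intro i _
    rw [hG i]
  have key : ∀ i ∈ Finset.range N, ‖(f (i + 1) - f i) • S i‖ ≤ C * M := by
    intro i hi
    rcases Nat.eq_zero_or_pos i with h0 | h1
    · subst h0
      have hS0 : S 0 = 0 := by simp [hSdef]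
      rw [hS0, smul_zero, norm_zero]
      exact mul_nonneg hCpos.le hM0
    · have hiN : i ∈ Finset.Icc 1 N := Finset.mem_Icc.mpr ⟨h1, (Finset.mem_range.mp hi).le⟩
      have hi1 : (1 : ℝ) ≤ (i : ℝ) := by exact_mod_cast h1
      have hRdiff : |R (i + 1) - R i| ≤ ∑ j ∈ Finset.Icc 1 k,
          1 / (qq j * QQ j) * ((j : ℝ) * ((i : ℝ) + 1) ^ (j - 1)) := by
        have e1 : R (i + 1) - R i
            = ∑ j ∈ Finset.Icc 1 k, β j * (((i : ℝ) + 1) ^ j - (i : ℝ) ^ j) := by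
          rw [hRdef]
          rw [← Finset.sum_sub_distrib]
          apply Finset.sum_congr rfl
          intro j _
          push_cast
          ring
        rw [e1]
        refine le_trans (Finset.abs_sum_le_sum_abs _ _) (Finset.sum_le_sum ?_)
        intro j hj
        have hd0 : (0 : ℝ) ≤ ((i : ℝ) + 1) ^ j - (i : ℝ) ^ j :=
          sub_nonneg.mpr (pow_le_pow_left₀ (by positivity) (by linarith) j)
        have hd1 : ((i : ℝ) + 1) ^ j - (i : ℝ) ^ j ≤ (j : ℝ) * ((i : ℝ) + 1) ^ (j - 1) := by
          have := pow_sub_pow_le_aux (i : ℝ) ((i : ℝ) + 1) (by positivity) (by linarith) j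
          simpa using this
        obtain ⟨hqj, hQj⟩ := hq j hj
        have hqQ : (0 : ℝ) < qq j * QQ j := by nlinarith
        rw [abs_mul, _root_.abs_of_nonneg hd0]
        exact mul_le_mul (hβ j hj) hd1 hd0 (by positivity)
      rw [norm_smul]
      calc ‖f (i + 1) - f i‖ * ‖S i‖
          ≤ (4 * Real.pi * |R (i + 1) - R i|) * ‖S i‖ :=
            mul_le_mul_of_nonneg_right (norm_eTwoPi_sub _ _) (norm_nonneg _)
        _ ≤ (4 * Real.pi * (∑ j ∈ Finset.Icc 1 k,
              1 / (qq j * QQ j) * ((j : ℝ) * ((i : ℝ) + 1) ^ (j - 1)))) * ‖S i‖ := by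
            apply mul_le_mul_of_nonneg_right _ (norm_nonneg _)
            exact mul_le_mul_of_nonneg_left hRdiff (by positivity)
        _ = 4 * Real.pi * ∑ j ∈ Finset.Icc 1 k,
              (1 / (qq j * QQ j) * ((j : ℝ) * ((i : ℝ) + 1) ^ (j - 1)) * ‖S i‖) := by
            rw [mul_assoc, Finset.sum_mul]
        _ ≤ 4 * Real.pi * ∑ _j ∈ Finset.Icc 1 k, ((k : ℝ) * 2 ^ k * M) := by
            apply mul_le_mul_of_nonneg_left _ (by positivity)
            apply Finset.sum_le_sum
            intro j hj
            obtain ⟨hj1, hjk⟩ := Finset.mem_Icc.mp hj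
            obtain ⟨hqj, hQj⟩ := hq j hj
            have hqQ : (0 : ℝ) < qq j * QQ j := by nlinarith
            have hstep : ((i : ℝ) + 1) ^ (j - 1) ≤ 2 ^ (j - 1) * (i : ℝ) ^ (j - 1) := by
              have h2i : (i : ℝ) + 1 ≤ 2 * i := by linarith
              calc ((i : ℝ) + 1) ^ (j - 1) ≤ (2 * (i : ℝ)) ^ (j - 1) :=
                    pow_le_pow_left₀ (by positivity) h2i _
                _ = 2 ^ (j - 1) * (i : ℝ) ^ (j - 1) := mul_pow _ _ _
            have hmax_i : (i : ℝ) ^ (j - 1) / (qq j * QQ j) * ‖S i‖ ≤ M :=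
              hmax (j, i) (Finset.mem_product.mpr ⟨hj, hiN⟩)
            have hjk' : (j : ℝ) ≤ k := by exact_mod_cast hjk
            have h2jk : (2 : ℝ) ^ (j - 1) ≤ 2 ^ k :=
              pow_le_pow_right₀ one_le_two (by omega)
            calc 1 / (qq j * QQ j) * ((j : ℝ) * ((i : ℝ) + 1) ^ (j - 1)) * ‖S i‖
                = (j : ℝ) * (((i : ℝ) + 1) ^ (j - 1) / (qq j * QQ j) * ‖S i‖) := by
                  ring
              _ ≤ (j : ℝ) * (2 ^ (j - 1) * ((i : ℝ) ^ (j - 1) / (qq j * QQ j) * ‖S i‖)) := by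
                  apply mul_le_mul_of_nonneg_left _ (by positivity)
                  have hh : ((i : ℝ) + 1) ^ (j - 1) / (qq j * QQ j) * ‖S i‖
                      ≤ (2 ^ (j - 1) * (i : ℝ) ^ (j - 1)) / (qq j * QQ j) * ‖S i‖ := by
                    gcongr
                  calc ((i : ℝ) + 1) ^ (j - 1) / (qq j * QQ j) * ‖S i‖
                      ≤ (2 ^ (j - 1) * (i : ℝ) ^ (j - 1)) / (qq j * QQ j) * ‖S i‖ := hh
                    _ = 2 ^ (j - 1) * ((i : ℝ) ^ (j - 1) / (qq j * QQ j) * ‖S i‖) := by ring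
              _ ≤ (j : ℝ) * (2 ^ (j - 1) * M) := by
                  apply mul_le_mul_of_nonneg_left _ (by positivity)
                  exact mul_le_mul_of_nonneg_left hmax_i (by positivity)
              _ ≤ (k : ℝ) * 2 ^ k * M := by
                  have hb : (j : ℝ) * 2 ^ (j - 1) ≤ (k : ℝ) * 2 ^ k :=
                    mul_le_mul hjk' h2jk (by positivity) (by positivity)
                  nlinarith [hM0, hb]
        _ = 4 * Real.pi * ((k : ℝ) * ((k : ℝ) * 2 ^ k * M)) := by
            rw [Finset.sum_const, Nat.card_Icc, Nat.add_sub_cancel, nsmul_eq_mul]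
        _ = C * M := by rw [hCdef]; ring
  have main : ‖∑ n ∈ Finset.Icc 1 N, a n * eTwoPi (Pbar n + R n)‖
      ≤ (1 + C) * (‖S N‖ + x * ((t0 : ℝ) ^ (j0 - 1) / (qq j0 * QQ j0)) * ‖S t0‖) := by
    have hxM : x * ((t0 : ℝ) ^ (j0 - 1) / (qq j0 * QQ j0)) * ‖S t0‖ = x * M := by
      rw [hMdef]; ring
    rw [habel]
    calc ‖f N • S N - ∑ i ∈ Finset.range N, (f (i + 1) - f i) • S i‖
        ≤ ‖f N • S N‖ + ‖∑ i ∈ Finset.range N, (f (i + 1) - f i) • S i‖ := norm_sub_le _ _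
      _ ≤ ‖S N‖ + ∑ i ∈ Finset.range N, ‖(f (i + 1) - f i) • S i‖ := by
          gcongr
          · rw [norm_smul, hfdef, norm_eTwoPi, one_mul]
          · exact norm_sum_le _ _
      _ ≤ ‖S N‖ + ∑ _i ∈ Finset.range N, (C * M) := by
          gcongr
          exact key _ ‹_›
      _ = ‖S N‖ + (N : ℝ) * (C * M) := by
          rw [Finset.sum_const, Finset.card_range, nsmul_eq_mul]
      _ ≤ ‖S N‖ + x * (C * M) := by
          gcongr
      _ ≤ (1 + C) * (‖S N‖ + x * ((t0 : ℝ) ^ (j0 - 1) / (qq j0 * QQ j0)) * ‖S t0‖) := by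
          rw [hxM]
          have hxM0 : 0 ≤ x * M := mul_nonneg (by linarith) hM0
          nlinarith [norm_nonneg (S N), hM0, hCpos, hxM0]
  exact main
end
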